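/- Main theorem: Let 𝔄, 𝔄' be unital C*-algebras with nontrivial projection P₁ ∈ 𝔄, P₂ = I − P₁, satisfying (♠) X𝔄P_i = {0} ⟹ X = 0 and (♣) Y𝔄'φ(P_i) = {0} ⟹ Y = 0. If φ : 𝔄 → 𝔄' is a bijective unital map satisfying φ(q_{n*}(I,...,I,A,B)) = q_{n*}(φ(I),...,φ(I),φ(A),φ(B)) and φ(q_{n*}(P,...,P,A,B)) = q_{n*}(φ(P),...,φ(P),φ(A),φ(B)) for all A,B ∈ 𝔄 and P ∈ {P₁,P₂}, then φ is a *-ring isomorphism: additive, multiplicative, and φ(A*) = φ(A)*. -/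

import Mathlib

set_option maxHeartbeats 1600000

def jstar {R : Type*} [Ring R] [StarRing R] (A B : R) : R := A * B + B * star A

def qstar {R : Type*} [Ring R] [StarRing R] : List R → R
  | [] => 0
  | x :: xs => xs.foldl jstar x

private lemma foldl_jstar_ones {R : Type*} [Ring R] [StarRing R] (j : ℕ) :
    List.foldl jstar (1:R) (List.replicate j (1:R)) = (2^j : ℕ) • (1:R) := by
  induction j with
  | zero => simp
  | succ j ih =>
    rw [List.replicate_succ', List.foldl_append, ih]
    simp only [List.foldl_cons, List.foldl_nil, jstar]
    rw [star_nsmul, star_one, smul_mul_assoc, one_mul, one_mul, ← add_nsmul]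
    congr 1
    rw [pow_succ]; ring

private lemma qstar_ones {R : Type*} [Ring R] [StarRing R] (k : ℕ) (A B : R) :
    qstar (List.replicate k (1:R) ++ [A, B]) = (2^k : ℕ) • (A*B + B*star A) := by
  cases k with
  | zero => simp [qstar, jstar]
  | succ k =>
    rw [List.replicate_succ, List.cons_append]
    show List.foldl jstar 1 (List.replicate k 1 ++ [A, B]) = _
    rw [List.foldl_append, foldl_jstar_ones]
    simp only [List.foldl_cons, List.foldl_nil, jstar]
    rw [star_nsmul, star_one, smul_mul_assoc, one_mul, mul_smul_comm, mul_one, ← add_nsmul]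
    rw [star_nsmul, smul_mul_assoc, mul_smul_comm, ← smul_add]
    congr 1
    rw [pow_succ]; ring

private lemma rmul {R : Type*} [Ring R] {u v w : R} (h : u*v = w) :
    ∀ c : R, c*u*v = c*w := fun c => by rw [mul_assoc, h]

private lemma mulcong {R : Type*} [Ring R] {u v w : R} (h : u*v = w) :
    ∀ c : R, u*(v*c) = w*c := fun c => by rw [← mul_assoc, h]

private lemma smul_sandwich {R : Type*} [Ring R] (k : ℕ) {p u q : R} (h : p*u*q = u) :
    p*(k•u)*q = k•u := by rw [mul_smul_comm, smul_mul_assoc, h]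

/-- atoms for an off-diagonal corner element: `x = p*x*q`. -/
private lemma atoms_off {R : Type*} [Ring R] [StarRing R] {p q x : R}
    (hpp : p*p = p) (hqq : q*q = q) (hpq : p*q = 0) (hqp : q*p = 0)
    (hsp : star p = p) (hsq : star q = q) (hx : p*x*q = x) :
    p*x = x ∧ x*q = x ∧ q*x = 0 ∧ x*p = 0 ∧ q*star x*p = star x := by
  refine ⟨?_, ?_, ?_, ?_, ?_⟩
  · conv_lhs => rw [← hx]
    simp only [← mul_assoc, hpp]; exact hx
  · conv_lhs => rw [← hx]
    rw [mul_assoc, hqq]; exact hx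
  · conv_lhs => rw [← hx]
    simp only [← mul_assoc, hqp, zero_mul]
  · conv_lhs => rw [← hx]
    rw [mul_assoc, hqp, mul_zero]
  · conv_rhs => rw [← hx]
    rw [star_mul, star_mul, hsp, hsq, mul_assoc]

/-- atoms for a diagonal corner element: `x = p*x*p`. -/
private lemma atoms_diag {R : Type*} [Ring R] [StarRing R] {p q x : R}
    (hpp : p*p = p) (hpq : p*q = 0) (hqp : q*p = 0)
    (hsp : star p = p) (hx : p*x*p = x) :
    p*x = x ∧ x*p = x ∧ q*x = 0 ∧ x*q = 0 ∧ p*star x*p = star x := by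
  refine ⟨?_, ?_, ?_, ?_, ?_⟩
  · conv_lhs => rw [← hx]
    simp only [← mul_assoc, hpp]; exact hx
  · conv_lhs => rw [← hx]
    rw [mul_assoc, hpp]; exact hx
  · conv_lhs => rw [← hx]
    simp only [← mul_assoc, hqp, zero_mul]
  · conv_lhs => rw [← hx]
    rw [mul_assoc, hpq, mul_zero]
  · conv_rhs => rw [← hx]
    rw [star_mul, star_mul, hsp, mul_assoc]

theorem stmt16 {𝔄 𝔄' : Type*} [CStarAlgebra 𝔄] [CStarAlgebra 𝔄']
    (n : ℕ) (hn : 2 ≤ n)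
    (P₁ : 𝔄) (hproj : P₁ * P₁ = P₁) (hsa : star P₁ = P₁) (hne0 : P₁ ≠ 0) (hne1 : P₁ ≠ 1)
    (φ : 𝔄 → 𝔄') (hbij : Function.Bijective φ) (hunital : φ 1 = 1)
    (hqI : ∀ A B : 𝔄, φ (qstar (List.replicate (n - 2) 1 ++ [A, B])) =
      qstar (List.replicate (n - 2) (φ 1) ++ [φ A, φ B]))
    (hqP : ∀ P ∈ ({P₁, 1 - P₁} : Set 𝔄), ∀ A B : 𝔄,
      φ (qstar (List.replicate (n - 2) P ++ [A, B])) =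
      qstar (List.replicate (n - 2) (φ P) ++ [φ A, φ B]))
    (hspade : ∀ P ∈ ({P₁, 1 - P₁} : Set 𝔄), ∀ X : 𝔄, (∀ A : 𝔄, X * A * P = 0) → X = 0)
    (hclub : ∀ P ∈ ({P₁, 1 - P₁} : Set 𝔄), ∀ Y : 𝔄', (∀ Z : 𝔄', Y * Z * φ P = 0) → Y = 0) :
    (∀ A B : 𝔄, φ (A + B) = φ A + φ B) ∧
    (∀ A B : 𝔄, φ (A * B) = φ A * φ B) ∧
    (∀ A : 𝔄, φ (star A) = star (φ A)) := by
  obtain ⟨g, hgf, hfg⟩ := Function.bijective_iff_has_inverse.mp hbij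
  have hinj : Function.Injective φ := hbij.injective
  set P₂ : 𝔄 := 1 - P₁ with hP₂def
  set m : ℕ := 2^(n-2) with hmdef
  have hH : ∀ a b : 𝔄, φ (m • (a*b + b*star a)) = m • (φ a*φ b + φ b*star (φ a)) := by
    intro a b
    have h := hqI a b
    rw [qstar_ones, hunital, qstar_ones] at h
    exact h
  have hmc : (m:ℂ) ≠ 0 := by
    simp [hmdef]
  have hcanA : ∀ x y : 𝔄, m • x = m • y → x = y := by
    intro x y h
    have h2 : (m:ℂ) • x = (m:ℂ) • y := by
      rw [Nat.cast_smul_eq_nsmul, Nat.cast_smul_eq_nsmul]; exact h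
    calc x = (m:ℂ)⁻¹ • ((m:ℂ) • x) := (inv_smul_smul₀ hmc _).symm
    _ = (m:ℂ)⁻¹ • ((m:ℂ) • y) := by rw [h2]
    _ = y := inv_smul_smul₀ hmc _
  have hcanB : ∀ x y : 𝔄', m • x = m • y → x = y := by
    intro x y h
    have h2 : (m:ℂ) • x = (m:ℂ) • y := by
      rw [Nat.cast_smul_eq_nsmul, Nat.cast_smul_eq_nsmul]; exact h
    calc x = (m:ℂ)⁻¹ • ((m:ℂ) • x) := (inv_smul_smul₀ hmc _).symm
    _ = (m:ℂ)⁻¹ • ((m:ℂ) • y) := by rw [h2]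
    _ = y := inv_smul_smul₀ hmc _
  have htwoA : ∀ x y : 𝔄, x + x = y + y → x = y := by
    intro x y h
    have h2 : (2:ℂ) • x = (2:ℂ) • y := by rw [two_smul, two_smul]; exact h
    calc x = (2:ℂ)⁻¹ • ((2:ℂ) • x) := (inv_smul_smul₀ two_ne_zero _).symm
    _ = (2:ℂ)⁻¹ • ((2:ℂ) • y) := by rw [h2]
    _ = y := inv_smul_smul₀ two_ne_zero _
  have htorA : ∀ x : 𝔄, x + x = 0 → x = 0 := fun x h => htwoA x 0 (by simpa using h)
  have htwoB : ∀ x y : 𝔄', x + x = y + y → x = y := by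
    intro x y h
    have h2 : (2:ℂ) • x = (2:ℂ) • y := by rw [two_smul, two_smul]; exact h
    calc x = (2:ℂ)⁻¹ • ((2:ℂ) • x) := (inv_smul_smul₀ two_ne_zero _).symm
    _ = (2:ℂ)⁻¹ • ((2:ℂ) • y) := by rw [h2]
    _ = y := inv_smul_smul₀ two_ne_zero _
  have htorB : ∀ x : 𝔄', x + x = 0 → x = 0 := fun x h => htwoB x 0 (by simpa using h)
  -- φ 0 = 0
  have hφ0 : φ 0 = 0 := by
    have h := hH 0 (g 0)
    rw [hfg] at h
    simpa using h
  -- ===== expansion lemmas =====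
  have pairT : ∀ x y X : 𝔄, φ (m • (X * g (φ x + φ y) + g (φ x + φ y) * star X)) =
      φ (m • (X*x + x*star X)) + φ (m • (X*y + y*star X)) := by
    intro x y X
    have h := hH X (g (φ x + φ y))
    rw [hfg] at h
    rw [h, hH X x, hH X y, ← smul_add]
    congr 1
    noncomm_ring
  have pairT' : ∀ x y X : 𝔄, φ (m • (g (φ x + φ y) * X + X * star (g (φ x + φ y)))) =
      φ (m • (x*X + X*star x)) + φ (m • (y*X + X*star y)) := by
    intro x y X
    have h := hH (g (φ x + φ y)) X
    rw [hfg] at h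
    rw [h, hH x X, hH y X, ← smul_add]
    congr 1
    simp only [star_add]
    noncomm_ring
  have tripleT : ∀ x y z X : 𝔄, φ (m • (X * g (φ x + φ y + φ z) + g (φ x + φ y + φ z) * star X)) =
      φ (m • (X*x + x*star X)) + φ (m • (X*y + y*star X)) + φ (m • (X*z + z*star X)) := by
    intro x y z X
    have h := hH X (g (φ x + φ y + φ z))
    rw [hfg] at h
    rw [h, hH X x, hH X y, hH X z, ← smul_add, ← smul_add]
    congr 1
    noncomm_ring
  have tripleT' : ∀ x y z X : 𝔄, φ (m • (g (φ x + φ y + φ z) * X + X * star (g (φ x + φ y + φ z)))) =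
      φ (m • (x*X + X*star x)) + φ (m • (y*X + X*star y)) + φ (m • (z*X + X*star z)) := by
    intro x y z X
    have h := hH (g (φ x + φ y + φ z)) X
    rw [hfg] at h
    rw [h, hH x X, hH y X, hH z X, ← smul_add, ← smul_add]
    congr 1
    simp only [star_add]
    noncomm_ring
  have quadT : ∀ x y z w X : 𝔄,
      φ (m • (X * g (φ x + φ y + φ z + φ w) + g (φ x + φ y + φ z + φ w) * star X)) =
      φ (m • (X*x + x*star X)) + φ (m • (X*y + y*star X)) + φ (m • (X*z + z*star X))
        + φ (m • (X*w + w*star X)) := by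
    intro x y z w X
    have h := hH X (g (φ x + φ y + φ z + φ w))
    rw [hfg] at h
    rw [h, hH X x, hH X y, hH X z, hH X w, ← smul_add, ← smul_add, ← smul_add]
    congr 1
    noncomm_ring
  -- ===== L2a : mixed off-diagonal additivity =====
  have L2a : ∀ p q : 𝔄, p*p = p → q*q = q → p*q = 0 → q*p = 0 → star p = p → star q = q →
      p + q = 1 → ∀ x y : 𝔄, p*x*q = x → q*y*p = y → φ (x + y) = φ x + φ y := by
    intro p q hpp hqq hpq hqp hsp hsq hsum1 x y hx hy
    obtain ⟨hpx, hxq, hqx, hxp, hsx⟩ := atoms_off hpp hqq hpq hqp hsp hsq hx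
    obtain ⟨hqy, hyp, hpy, hyq, hsy⟩ := atoms_off hqq hpp hqp hpq hsq hsp hy
    obtain ⟨hqsx, hsxp, hpsx, hsxq, _⟩ := atoms_off hqq hpp hqp hpq hsq hsp hsx
    obtain ⟨hpsy, hsyq, hqsy, hsyp, _⟩ := atoms_off hpp hqq hpq hqp hsp hsq hsy
    set C := g (φ x + φ y) with hCdef
    have hc3 : C*p + p*star C = y + star y := by
      have h := pairT' x y p
      rw [show x*p + p*star x = (0:𝔄) from by rw [hxp, hpsx, add_zero],
          show y*p + p*star y = y + star y from by rw [hyp, hpsy],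
          smul_zero, hφ0, zero_add] at h
      exact hcanA _ _ (hinj h)
    have hc4 : C*q + q*star C = x + star x := by
      have h := pairT' x y q
      rw [show y*q + q*star y = (0:𝔄) from by rw [hyq, hqsy, add_zero],
          show x*q + q*star x = x + star x from by rw [hxq, hqsx],
          smul_zero, hφ0, add_zero] at h
      exact hcanA _ _ (hinj h)
    have hd : p*C + C*p = q*C + C*q := by
      have h1 := pairT x y p
      rw [hsp, show p*x + x*p = x from by rw [hpx, hxp, add_zero],
          show p*y + y*p = y from by rw [hpy, hyp, zero_add]] at h1
      have h2 := pairT x y q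
      rw [hsq, show q*x + x*q = x from by rw [hqx, hxq, zero_add],
          show q*y + y*q = y from by rw [hqy, hyq, add_zero]] at h2
      exact hcanA _ _ (hinj (h1.trans h2.symm))
    have hpCp : p*C*p = 0 := by
      apply htorA
      have e1 : p*(p*C + C*p)*p = p*C*p + p*C*p := by
        simp only [mul_add, add_mul, ← mul_assoc, hpp, rmul hpp]
      have e2 : p*(q*C + C*q)*p = 0 := by
        simp only [mul_add, add_mul, ← mul_assoc, hpq, zero_mul, rmul hqp, mul_zero, add_zero]
      rw [← e1, hd, e2]
    have hqCq : q*C*q = 0 := by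
      apply htorA
      have e1 : q*(q*C + C*q)*q = q*C*q + q*C*q := by
        simp only [mul_add, add_mul, ← mul_assoc, hqq, rmul hqq]
      have e2 : q*(p*C + C*p)*q = 0 := by
        simp only [mul_add, add_mul, ← mul_assoc, hqp, zero_mul, rmul hpq, mul_zero, add_zero]
      rw [← e1, ← hd, e2]
    have hqCp : q*C*p = y := by
      have e1 : q*(C*p + p*star C)*p = q*C*p := by
        simp only [mul_add, add_mul, ← mul_assoc, hqp, zero_mul, rmul hpp, mul_zero, add_zero, hpp]
      have e2 : q*(y + star y)*p = y := by
        simp only [mul_add, add_mul]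
        rw [hy, hqsy, zero_mul, add_zero]
      rw [← e2, ← hc3, e1]
    have hpCq : p*C*q = x := by
      have e1 : p*(C*q + q*star C)*q = p*C*q := by
        simp only [mul_add, add_mul, ← mul_assoc, hpq, zero_mul, rmul hqq, mul_zero, add_zero, hqq]
      have e2 : p*(x + star x)*q = x := by
        simp only [mul_add, add_mul]
        rw [hx, hpsx, zero_mul, add_zero]
      rw [← e2, ← hc4, e1]
    have hCval : C = x + y := by
      have h : (p+q)*C*(p+q) = p*C*p + p*C*q + q*C*p + q*C*q := by noncomm_ring
      calc C = (p+q)*C*(p+q) := by rw [hsum1, one_mul, mul_one]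
      _ = p*C*p + p*C*q + q*C*p + q*C*q := h
      _ = x + y := by rw [hpCp, hpCq, hqCp, hqCq]; abel
    calc φ (x + y) = φ C := by rw [hCval]
    _ = φ x + φ y := hfg _
  -- ===== hb1 : basic block decomposition of C for (diagonal, offdiagonal) pairs =====
  have hb1 : ∀ p q : 𝔄, p*p = p → q*q = q → p*q = 0 → q*p = 0 → star p = p → star q = q →
      p + q = 1 → ∀ a b : 𝔄, p*a*p = a → q*b + b*q = b →
      (q * g (φ a + φ b) + g (φ a + φ b) * q = b) ∧
      (g (φ a + φ b) = p * g (φ a + φ b) * p + b) := by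
    intro p q hpp hqq hpq hqp hsp hsq hsum1 a b ha hb
    obtain ⟨hpa, hap, hqa, haq, hsa'⟩ := atoms_diag hpp hpq hqp hsp ha
    set C := g (φ a + φ b) with hCdef
    have h1 : q*C + C*q = b := by
      have h := pairT a b q
      rw [hsq, show q*a + a*q = (0:𝔄) from by rw [hqa, haq, add_zero],
          hb, smul_zero, hφ0, zero_add] at h
      exact hcanA _ _ (hinj h)
    have hqbq : q*b*q = 0 := by
      have e : q*b*q + b*q = b*q := by
        conv_rhs => rw [← hb]
        rw [add_mul, mul_assoc b q q, hqq]
      have e2 : q*b*q + b*q = 0 + b*q := by rw [e, zero_add]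
      exact add_right_cancel e2
    have hp1q : p = 1 - q := by rw [← hsum1]; abel
    have hpbq : p*b*q = b*q := by
      rw [hp1q, sub_mul, sub_mul, one_mul, hqbq, sub_zero]
    have hqbp : q*b*p = q*b := by
      rw [hp1q, mul_sub, mul_one, hqbq, sub_zero]
    have hboff : q*b*p + p*b*q = b := by rw [hqbp, hpbq]; exact hb
    have hqCq : q*C*q = 0 := by
      apply htorA
      have e1 : q*(q*C + C*q)*q = q*C*q + q*C*q := by
        simp only [mul_add, add_mul, ← mul_assoc, hqq, rmul hqq]
      rw [← e1, h1]; exact hqbq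
    have hpCq : p*C*q = p*b*q := by
      have e1 : p*(q*C + C*q)*q = p*C*q := by
        simp only [mul_add, add_mul, ← mul_assoc, hpq, zero_mul, rmul hqq, zero_add]
      rw [← e1, h1]
    have hqCp : q*C*p = q*b*p := by
      have e1 : q*(q*C + C*q)*p = q*C*p := by
        simp only [mul_add, add_mul, ← mul_assoc, hqq, rmul hqp, mul_zero, add_zero]
      rw [← e1, h1]
    refine ⟨h1, ?_⟩
    calc C = (p+q)*C*(p+q) := by rw [hsum1, one_mul, mul_one]
    _ = p*C*p + p*C*q + q*C*p + q*C*q := by noncomm_ring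
    _ = p*C*p + b := by
        rw [hpCq, hqCp, hqCq, add_zero, add_assoc]
        congr 1
        rw [add_comm]; exact hboff
  -- ===== h2A : φ(a + b) = φa + φb for a ∈ pp, b ∈ pq =====
  have h2A : ∀ p q : 𝔄, p*p = p → q*q = q → p*q = 0 → q*p = 0 → star p = p → star q = q →
      p + q = 1 → (∀ X : 𝔄, (∀ Z : 𝔄, X*Z*q = 0) → X = 0) →
      ∀ a b : 𝔄, p*a*p = a → p*b*q = b → φ (a + b) = φ a + φ b := by
    intro p q hpp hqq hpq hqp hsp hsq hsum1 hspq a b ha hb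
    obtain ⟨hpa, hap, hqa, haq, hsa'⟩ := atoms_diag hpp hpq hqp hsp ha
    obtain ⟨hpb, hbq, hqb, hbp, hsb⟩ := atoms_off hpp hqq hpq hqp hsp hsq hb
    obtain ⟨hqsb, hsbp, hpsb, hsbq, _⟩ := atoms_off hqq hpp hqp hpq hsq hsp hsb
    have hqb' : q*b + b*q = b := by rw [hqb, hbq, zero_add]
    obtain ⟨h1, hCdec⟩ := hb1 p q hpp hqq hpq hqp hsp hsq hsum1 a b ha hqb'
    set C := g (φ a + φ b) with hCdef
    set E := p*C*p with hEdef
    have hpE : p*E = E := by rw [hEdef]; simp only [← mul_assoc, hpp]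
    have hEp : E*p = E := by rw [hEdef, mul_assoc, hpp]
    have hqE : q*E = 0 := by rw [hEdef]; simp only [← mul_assoc, hqp, zero_mul]
    have hEq : E*q = 0 := by rw [hEdef, mul_assoc, hpq, mul_zero]
    have hsE : star E = p * star C * p := by rw [hEdef, star_mul, star_mul, hsp, mul_assoc]
    have key : ∀ Z : 𝔄, E*(p*Z*q) = a*(p*Z*q) := by
      intro Z
      set t := p*Z*q with htdef
      have hpt : p*t = t := by rw [htdef]; simp only [← mul_assoc, hpp]
      have htq : t*q = t := by rw [htdef, mul_assoc, hqq]
      have hqt : q*t = 0 := by rw [htdef]; simp only [← mul_assoc, hqp, zero_mul]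
      have htp : t*p = 0 := by rw [htdef, mul_assoc, hqp, mul_zero]
      have hta : t*star a = 0 := by
        conv_lhs => rw [← hsa']
        simp only [← mul_assoc, htp, zero_mul]
      have hbt : b*t = 0 := by
        conv_lhs => rw [← hpt]
        simp only [← mul_assoc, hbp, zero_mul]
      have htsE : t * star E = 0 := by
        rw [hsE]; simp only [← mul_assoc, htp, zero_mul]
      have h2 := pairT' a b t
      have hLHS : C*t + t*star C = E*t + t*star b := by
        conv_lhs => rw [hCdec]
        rw [star_add, add_mul, mul_add, hbt, htsE]
        abel
      rw [hLHS, show a*t + t*star a = a*t from by rw [hta, add_zero],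
          show b*t + t*star b = t*star b from by rw [hbt, zero_add]] at h2
      have hts_pp : p*(m•(t*star b))*p = m•(t*star b) := by
        rw [mul_smul_comm, smul_mul_assoc]
        congr 1
        rw [← mul_assoc, hpt, mul_assoc, hsbp]
      have hat_off : q*(m•(a*t)) + (m•(a*t))*q = m•(a*t) := by
        rw [mul_smul_comm, smul_mul_assoc]
        have e1 : q*(a*t) = 0 := by rw [← mul_assoc, hqa, zero_mul]
        have e2 : (a*t)*q = a*t := by rw [mul_assoc, htq]
        rw [e1, e2, smul_zero, zero_add]
      obtain ⟨h3, _⟩ := hb1 p q hpp hqq hpq hqp hsp hsq hsum1 (m•(t*star b)) (m•(a*t)) hts_pp hat_off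
      have hC2 : g (φ (m•(t*star b)) + φ (m•(a*t))) = m•(E*t + t*star b) := by
        rw [add_comm (φ (m•(t*star b))) (φ (m•(a*t))), ← h2, hgf]
      rw [hC2] at h3
      have hq_lhs : q*(m•(E*t + t*star b)) + (m•(E*t + t*star b))*q = m•(E*t) := by
        rw [mul_smul_comm, smul_mul_assoc, ← smul_add]
        congr 1
        have e1 : q*(E*t + t*star b) = 0 := by
          simp only [mul_add, ← mul_assoc, hqE, hqt, zero_mul, add_zero]
        have e2 : (E*t + t*star b)*q = E*t := by
          simp only [add_mul, mul_assoc, htq, hsbq, mul_zero, add_zero]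
        rw [e1, e2, zero_add]
      rw [hq_lhs] at h3
      exact hcanA _ _ h3
    have hEa : E = a := by
      have h4 : ∀ Z, (E - a)*Z*q = 0 := by
        intro Z
        have e1 : E*(p*Z*q) = E*Z*q := by simp only [← mul_assoc, hEp]
        have e2 : a*(p*Z*q) = a*Z*q := by simp only [← mul_assoc, hap]
        have e3 := key Z
        rw [e1, e2] at e3
        rw [sub_mul, sub_mul, e3, sub_self]
      exact sub_eq_zero.mp (hspq (E - a) h4)
    have hCv : C = a + b := by rw [hCdec, hEa]
    calc φ (a + b) = φ C := by rw [hCv]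
    _ = φ a + φ b := hfg _
  -- ===== h2B : φ(a + b) = φa + φb for a ∈ pp, b ∈ qp =====
  have h2B : ∀ p q : 𝔄, p*p = p → q*q = q → p*q = 0 → q*p = 0 → star p = p → star q = q →
      p + q = 1 → (∀ X : 𝔄, (∀ Z : 𝔄, X*Z*q = 0) → X = 0) →
      ∀ a b : 𝔄, p*a*p = a → q*b*p = b → φ (a + b) = φ a + φ b := by
    intro p q hpp hqq hpq hqp hsp hsq hsum1 hspq a b ha hb
    obtain ⟨hpa, hap, hqa, haq, hsa'⟩ := atoms_diag hpp hpq hqp hsp ha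
    obtain ⟨hqb, hbp, hpb, hbq, hsb⟩ := atoms_off hqq hpp hqp hpq hsq hsp hb
    obtain ⟨hpsb, hsbq, hqsb, hsbp, _⟩ := atoms_off hpp hqq hpq hqp hsp hsq hsb
    have hqb' : q*b + b*q = b := by rw [hqb, hbq, add_zero]
    obtain ⟨h1, hCdec⟩ := hb1 p q hpp hqq hpq hqp hsp hsq hsum1 a b ha hqb'
    set C := g (φ a + φ b) with hCdef
    set E := p*C*p with hEdef
    have hpE : p*E = E := by rw [hEdef]; simp only [← mul_assoc, hpp]
    have hEp : E*p = E := by rw [hEdef, mul_assoc, hpp]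
    have hqE : q*E = 0 := by rw [hEdef]; simp only [← mul_assoc, hqp, zero_mul]
    have hEq : E*q = 0 := by rw [hEdef, mul_assoc, hpq, mul_zero]
    have hsE : star E = p * star C * p := by rw [hEdef, star_mul, star_mul, hsp, mul_assoc]
    have key : ∀ Z : 𝔄, E*(p*Z*q) = a*(p*Z*q) := by
      intro Z
      set t := p*Z*q with htdef
      have hpt : p*t = t := by rw [htdef]; simp only [← mul_assoc, hpp]
      have htq : t*q = t := by rw [htdef, mul_assoc, hqq]
      have hqt : q*t = 0 := by rw [htdef]; simp only [← mul_assoc, hqp, zero_mul]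
      have htp : t*p = 0 := by rw [htdef, mul_assoc, hqp, mul_zero]
      have hta : t*star a = 0 := by
        conv_lhs => rw [← hsa']
        simp only [← mul_assoc, htp, zero_mul]
      have htsb : t*star b = 0 := by
        conv_lhs => rw [← hsb]
        simp only [← mul_assoc, htp, zero_mul]
      have htsE : t * star E = 0 := by
        rw [hsE]; simp only [← mul_assoc, htp, zero_mul]
      have h2 := pairT' a b t
      have hLHS : C*t + t*star C = E*t + b*t := by
        conv_lhs => rw [hCdec]
        rw [star_add, add_mul, mul_add, htsb, htsE]
        abel
      rw [hLHS, show a*t + t*star a = a*t from by rw [hta, add_zero],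
          show b*t + t*star b = b*t from by rw [htsb, add_zero]] at h2
      have hbt_qq : q*(m•(b*t))*q = m•(b*t) := by
        rw [mul_smul_comm, smul_mul_assoc]
        congr 1
        rw [← mul_assoc, hqb, mul_assoc, htq]
      have hat_off : p*(m•(a*t)) + (m•(a*t))*p = m•(a*t) := by
        rw [mul_smul_comm, smul_mul_assoc]
        have e1 : p*(a*t) = a*t := by rw [← mul_assoc, hpa]
        have e2 : (a*t)*p = 0 := by rw [mul_assoc, htp, mul_zero]
        rw [e1, e2, smul_zero, add_zero]
      obtain ⟨h3, _⟩ := hb1 q p hqq hpp hqp hpq hsq hsp (by rw [add_comm]; exact hsum1)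
        (m•(b*t)) (m•(a*t)) hbt_qq hat_off
      have hC2 : g (φ (m•(b*t)) + φ (m•(a*t))) = m•(E*t + b*t) := by
        rw [add_comm (φ (m•(b*t))) (φ (m•(a*t))), ← h2, hgf]
      rw [hC2] at h3
      have hq_lhs : p*(m•(E*t + b*t)) + (m•(E*t + b*t))*p = m•(E*t) := by
        rw [mul_smul_comm, smul_mul_assoc, ← smul_add]
        congr 1
        have e1 : p*(E*t + b*t) = E*t := by
          simp only [mul_add, ← mul_assoc, hpE, hpb, zero_mul, add_zero]
        have e2 : (E*t + b*t)*p = 0 := by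
          simp only [add_mul, mul_assoc, htp, mul_zero, add_zero]
        rw [e1, e2, add_zero]
      rw [hq_lhs] at h3
      exact hcanA _ _ h3
    have hEa : E = a := by
      have h4 : ∀ Z, (E - a)*Z*q = 0 := by
        intro Z
        have e1 : E*(p*Z*q) = E*Z*q := by simp only [← mul_assoc, hEp]
        have e2 : a*(p*Z*q) = a*Z*q := by simp only [← mul_assoc, hap]
        have e3 := key Z
        rw [e1, e2] at e3
        rw [sub_mul, sub_mul, e3, sub_self]
      exact sub_eq_zero.mp (hspq (E - a) h4)
    have hCv : C = a + b := by rw [hCdec, hEa]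
    calc φ (a + b) = φ C := by rw [hCv]
    _ = φ a + φ b := hfg _
  -- ===== htric : no-defect triple class (pp, qq, pq) =====
  have htric : ∀ p q : 𝔄, p*p = p → q*q = q → p*q = 0 → q*p = 0 → star p = p → star q = q →
      p + q = 1 → (∀ X : 𝔄, (∀ Z : 𝔄, X*Z*q = 0) → X = 0) →
      (∀ X : 𝔄, (∀ Z : 𝔄, X*Z*p = 0) → X = 0) →
      ∀ d₁ d₂ o : 𝔄, p*d₁*p = d₁ → q*d₂*q = d₂ → p*o*q = o →
      φ (d₁ + d₂ + o) = φ d₁ + φ d₂ + φ o := by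
    intro p q hpp hqq hpq hqp hsp hsq hsum1 hspq hspp d₁ d₂ o hd1 hd2 ho
    obtain ⟨hpd1, hd1p, hqd1, hd1q, _⟩ := atoms_diag hpp hpq hqp hsp hd1
    obtain ⟨hqd2, hd2q, hpd2, hd2p, _⟩ := atoms_diag hqq hqp hpq hsq hd2
    obtain ⟨hpo, hoq, hqo, hop, _⟩ := atoms_off hpp hqq hpq hqp hsp hsq ho
    set C := g (φ d₁ + φ d₂ + φ o) with hCdef
    have hPC : p*C + C*p = d₁ + d₁ + o := by
      have h := tripleT d₁ d₂ o p
      rw [hsp, show p*d₁ + d₁*p = d₁ + d₁ from by rw [hpd1, hd1p],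
          show p*d₂ + d₂*p = (0:𝔄) from by rw [hpd2, hd2p, add_zero],
          show p*o + o*p = o from by rw [hpo, hop, add_zero],
          smul_zero, hφ0, add_zero,
          (h2A p q hpp hqq hpq hqp hsp hsq hsum1 hspq (m•(d₁+d₁)) (m•o)
            (smul_sandwich m (by simp only [mul_add, add_mul, hpd1, hd1p]))
            (smul_sandwich m ho)).symm, ← smul_add] at h
      exact hcanA _ _ (hinj h)
    have hQC : q*C + C*q = d₂ + d₂ + o := by
      have h := tripleT d₁ d₂ o q
      rw [hsq, show q*d₁ + d₁*q = (0:𝔄) from by rw [hqd1, hd1q, add_zero],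
          show q*d₂ + d₂*q = d₂ + d₂ from by rw [hqd2, hd2q],
          show q*o + o*q = o from by rw [hqo, hoq, zero_add],
          smul_zero, hφ0, zero_add,
          (h2B q p hqq hpp hqp hpq hsq hsp (by rw [add_comm]; exact hsum1) hspp
            (m•(d₂+d₂)) (m•o)
            (smul_sandwich m (by simp only [mul_add, add_mul, hqd2, hd2q]))
            (smul_sandwich m ho)).symm, ← smul_add] at h
      exact hcanA _ _ (hinj h)
    have hpCp : p*C*p = d₁ := by
      apply htwoA
      have e1 : p*(p*C + C*p)*p = p*C*p + p*C*p := by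
        simp only [mul_add, add_mul, ← mul_assoc, hpp, rmul hpp]
      have e2 : p*(d₁ + d₁ + o)*p = d₁ + d₁ := by
        simp only [mul_add, add_mul, hpd1, hd1p, hpo, hop, add_zero]
      rw [← e1, hPC, e2]
    have hqCq : q*C*q = d₂ := by
      apply htwoA
      have e1 : q*(q*C + C*q)*q = q*C*q + q*C*q := by
        simp only [mul_add, add_mul, ← mul_assoc, hqq, rmul hqq]
      have e2 : q*(d₂ + d₂ + o)*q = d₂ + d₂ := by
        simp only [mul_add, add_mul, hqd2, hd2q, hqo, zero_mul, add_zero]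
      rw [← e1, hQC, e2]
    have hpCq : p*C*q = o := by
      have e1 : p*(p*C + C*p)*q = p*C*q := by
        simp only [mul_add, add_mul, ← mul_assoc, hpp, rmul hpq, mul_zero, add_zero]
      have e2 : p*(d₁ + d₁ + o)*q = o := by
        simp only [mul_add, add_mul, hpd1, hd1q, hpo, hoq, zero_add]
      calc p*C*q = p*(p*C + C*p)*q := e1.symm
      _ = p*(d₁ + d₁ + o)*q := by rw [hPC]
      _ = o := e2
    have hqCp : q*C*p = 0 := by
      have e1 : q*(p*C + C*p)*p = q*C*p := by
        simp only [mul_add, add_mul, ← mul_assoc, hqp, zero_mul, rmul hpp, zero_add]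
      have e2 : q*(d₁ + d₁ + o)*p = 0 := by
        simp only [mul_add, add_mul, hqd1, hqo, zero_mul, add_zero]
      calc q*C*p = q*(p*C + C*p)*p := e1.symm
      _ = q*(d₁ + d₁ + o)*p := by rw [hPC]
      _ = 0 := e2
    have hCv : C = d₁ + d₂ + o := by
      calc C = (p+q)*C*(p+q) := by rw [hsum1, one_mul, mul_one]
      _ = p*C*p + p*C*q + q*C*p + q*C*q := by noncomm_ring
      _ = d₁ + d₂ + o := by rw [hpCp, hpCq, hqCp, hqCq]; abel
    calc φ (d₁ + d₂ + o) = φ C := by rw [hCv]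
    _ = φ d₁ + φ d₂ + φ o := hfg _
  -- ===== h3term : (pp, pq, qp) triples =====
  have h3term : ∀ p q : 𝔄, p*p = p → q*q = q → p*q = 0 → q*p = 0 → star p = p → star q = q →
      p + q = 1 → (∀ X : 𝔄, (∀ Z : 𝔄, X*Z*q = 0) → X = 0) →
      (∀ X : 𝔄, (∀ Z : 𝔄, X*Z*p = 0) → X = 0) →
      ∀ a b c : 𝔄, p*a*p = a → p*b*q = b → q*c*p = c →
      φ (a + b + c) = φ a + φ b + φ c := by
    intro p q hpp hqq hpq hqp hsp hsq hsum1 hspq hspp a b c ha hb hc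
    obtain ⟨hpa, hap, hqa, haq, hsa'⟩ := atoms_diag hpp hpq hqp hsp ha
    obtain ⟨hpb, hbq, hqb, hbp, hsb⟩ := atoms_off hpp hqq hpq hqp hsp hsq hb
    obtain ⟨hqc, hcp, hpc, hcq, hsc⟩ := atoms_off hqq hpp hqp hpq hsq hsp hc
    obtain ⟨hqsb, hsbp, hpsb, hsbq, _⟩ := atoms_off hqq hpp hqp hpq hsq hsp hsb
    obtain ⟨hpsc, hscq, hqsc, hscp, _⟩ := atoms_off hpp hqq hpq hqp hsp hsq hsc
    set C := g (φ a + φ b + φ c) with hCdef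
    have hQC : q*C + C*q = b + c := by
      have h := tripleT a b c q
      rw [hsq, show q*a + a*q = (0:𝔄) from by rw [hqa, haq, add_zero],
          show q*b + b*q = b from by rw [hqb, hbq, zero_add],
          show q*c + c*q = c from by rw [hqc, hcq, add_zero],
          smul_zero, hφ0, zero_add,
          (L2a p q hpp hqq hpq hqp hsp hsq hsum1 (m•b) (m•c)
            (smul_sandwich m hb) (smul_sandwich m hc)).symm, ← smul_add] at h
      exact hcanA _ _ (hinj h)
    have hqCq : q*C*q = 0 := by
      apply htorA
      have e1 : q*(q*C + C*q)*q = q*C*q + q*C*q := by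
        simp only [mul_add, add_mul, ← mul_assoc, hqq, rmul hqq]
      have e2 : q*(b + c)*q = 0 := by
        simp only [mul_add, add_mul, hqb, hqc, hcq, zero_mul, add_zero, zero_add]
      rw [← e1, hQC, e2]
    have hpCq : p*C*q = b := by
      have e1 : p*(q*C + C*q)*q = p*C*q := by
        simp only [mul_add, add_mul, ← mul_assoc, hpq, zero_mul, rmul hqq, zero_add]
      have e2 : p*(b + c)*q = b := by
        simp only [mul_add, add_mul, hpb, hbq, hpc, zero_mul, add_zero]
      calc p*C*q = p*(q*C + C*q)*q := e1.symm
      _ = p*(b + c)*q := by rw [hQC]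
      _ = b := e2
    have hqCp : q*C*p = c := by
      have e1 : q*(q*C + C*q)*p = q*C*p := by
        simp only [mul_add, add_mul, ← mul_assoc, hqq, rmul hqp, mul_zero, add_zero]
      have e2 : q*(b + c)*p = c := by
        simp only [mul_add, add_mul, hqb, hqc, hcp, zero_mul, zero_add]
      calc q*C*p = q*(q*C + C*q)*p := e1.symm
      _ = q*(b + c)*p := by rw [hQC]
      _ = c := e2
    have hCdec : C = p*C*p + b + c := by
      calc C = (p+q)*C*(p+q) := by rw [hsum1, one_mul, mul_one]
      _ = p*C*p + p*C*q + q*C*p + q*C*q := by noncomm_ring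
      _ = p*C*p + b + c := by rw [hpCq, hqCp, hqCq, add_zero]
    set E := p*C*p with hEdef
    have hpE : p*E = E := by rw [hEdef]; simp only [← mul_assoc, hpp]
    have hEp : E*p = E := by rw [hEdef, mul_assoc, hpp]
    have hqE : q*E = 0 := by rw [hEdef]; simp only [← mul_assoc, hqp, zero_mul]
    have hEq : E*q = 0 := by rw [hEdef, mul_assoc, hpq, mul_zero]
    have hsE : star E = p * star C * p := by rw [hEdef, star_mul, star_mul, hsp, mul_assoc]
    have key : ∀ Z : 𝔄, E*(p*Z*q) = a*(p*Z*q) := by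
      intro Z
      set t := p*Z*q with htdef
      have hpt : p*t = t := by rw [htdef]; simp only [← mul_assoc, hpp]
      have htq : t*q = t := by rw [htdef, mul_assoc, hqq]
      have hqt : q*t = 0 := by rw [htdef]; simp only [← mul_assoc, hqp, zero_mul]
      have htp : t*p = 0 := by rw [htdef, mul_assoc, hqp, mul_zero]
      have hta : t*star a = 0 := by
        conv_lhs => rw [← hsa']
        simp only [← mul_assoc, htp, zero_mul]
      have hbt : b*t = 0 := by
        conv_lhs => rw [← hpt]
        simp only [← mul_assoc, hbp, zero_mul]
      have htsc : t*star c = 0 := by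
        conv_lhs => rw [← hsc]
        simp only [← mul_assoc, htp, zero_mul]
      have htsE : t * star E = 0 := by
        rw [hsE]; simp only [← mul_assoc, htp, zero_mul]
      have h2 := tripleT' a b c t
      have hLHS : C*t + t*star C = E*t + t*star b + c*t := by
        conv_lhs => rw [hCdec]
        simp only [star_add, add_mul, mul_add, hbt, htsE, htsc]
        abel
      rw [hLHS, show a*t + t*star a = a*t from by rw [hta, add_zero],
          show b*t + t*star b = t*star b from by rw [hbt, zero_add],
          show c*t + t*star c = c*t from by rw [htsc, add_zero]] at h2
      have e4 : φ (m•(a*t)) + φ (m•(t*star b)) + φ (m•(c*t)) =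
          φ (m•(t*star b) + m•(c*t) + m•(a*t)) := by
        rw [htric p q hpp hqq hpq hqp hsp hsq hsum1 hspq hspp (m•(t*star b)) (m•(c*t)) (m•(a*t))
              (smul_sandwich m (by rw [← mul_assoc, hpt, mul_assoc, hsbp]))
              (smul_sandwich m (by rw [← mul_assoc, hqc, mul_assoc, htq]))
              (smul_sandwich m (by rw [← mul_assoc, hpa, mul_assoc, htq]))]
        abel
      have h5 := h2.trans e4
      rw [← smul_add, ← smul_add] at h5
      have h6 := hcanA _ _ (hinj h5)
      have h7 : E*t + (t*star b + c*t) = a*t + (t*star b + c*t) := by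
        calc E*t + (t*star b + c*t) = E*t + t*star b + c*t := by abel
        _ = t*star b + c*t + a*t := h6
        _ = a*t + (t*star b + c*t) := by abel
      exact add_right_cancel h7
    have hEa : E = a := by
      have h4 : ∀ Z, (E - a)*Z*q = 0 := by
        intro Z
        have e1 : E*(p*Z*q) = E*Z*q := by simp only [← mul_assoc, hEp]
        have e2 : a*(p*Z*q) = a*Z*q := by simp only [← mul_assoc, hap]
        have e3 := key Z
        rw [e1, e2] at e3
        rw [sub_mul, sub_mul, e3, sub_self]
      exact sub_eq_zero.mp (hspq (E - a) h4)
    have hCv : C = a + b + c := by rw [hCdec, hEa]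
    calc φ (a + b + c) = φ C := by rw [hCv]
    _ = φ a + φ b + φ c := hfg _
  -- ===== hFOUR : full Peirce 4-term additivity =====
  have hFOUR : ∀ p q : 𝔄, p*p = p → q*q = q → p*q = 0 → q*p = 0 → star p = p → star q = q →
      p + q = 1 → (∀ X : 𝔄, (∀ Z : 𝔄, X*Z*q = 0) → X = 0) →
      (∀ X : 𝔄, (∀ Z : 𝔄, X*Z*p = 0) → X = 0) →
      ∀ a b c d : 𝔄, p*a*p = a → p*b*q = b → q*c*p = c → q*d*q = d →
      φ (a + b + c + d) = φ a + φ b + φ c + φ d := by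
    intro p q hpp hqq hpq hqp hsp hsq hsum1 hspq hspp a b c d ha hb hc hd
    obtain ⟨hpa, hap, hqa, haq, _⟩ := atoms_diag hpp hpq hqp hsp ha
    obtain ⟨hpb, hbq, hqb, hbp, _⟩ := atoms_off hpp hqq hpq hqp hsp hsq hb
    obtain ⟨hqc, hcp, hpc, hcq, _⟩ := atoms_off hqq hpp hqp hpq hsq hsp hc
    obtain ⟨hqd, hdq, hpd, hdp, _⟩ := atoms_diag hqq hqp hpq hsq hd
    set C := g (φ a + φ b + φ c + φ d) with hCdef
    have hPC : p*C + C*p = a + a + b + c := by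
      have h := quadT a b c d p
      rw [hsp, show p*a + a*p = a + a from by rw [hpa, hap],
          show p*b + b*p = b from by rw [hpb, hbp, add_zero],
          show p*c + c*p = c from by rw [hpc, hcp, zero_add],
          show p*d + d*p = (0:𝔄) from by rw [hpd, hdp, add_zero],
          smul_zero, hφ0, add_zero,
          (h3term p q hpp hqq hpq hqp hsp hsq hsum1 hspq hspp (m•(a+a)) (m•b) (m•c)
            (smul_sandwich m (by simp only [mul_add, add_mul, hpa, hap]))
            (smul_sandwich m hb) (smul_sandwich m hc)).symm,
          ← smul_add, ← smul_add] at h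
      exact hcanA _ _ (hinj h)
    have hQC : q*C + C*q = d + d + c + b := by
      have h := quadT a b c d q
      rw [hsq, show q*a + a*q = (0:𝔄) from by rw [hqa, haq, add_zero],
          show q*b + b*q = b from by rw [hqb, hbq, zero_add],
          show q*c + c*q = c from by rw [hqc, hcq, add_zero],
          show q*d + d*q = d + d from by rw [hqd, hdq],
          smul_zero, hφ0, zero_add] at h
      have e4 : φ (m•b) + φ (m•c) + φ (m•(d+d)) = φ (m•(d+d) + m•c + m•b) := by
        rw [h3term q p hqq hpp hqp hpq hsq hsp (by rw [add_comm]; exact hsum1) hspp hspq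
              (m•(d+d)) (m•c) (m•b)
              (smul_sandwich m (by simp only [mul_add, add_mul, hqd, hdq]))
              (smul_sandwich m hc) (smul_sandwich m hb)]
        abel
      rw [e4, ← smul_add, ← smul_add] at h
      exact hcanA _ _ (hinj h)
    have hpCp : p*C*p = a := by
      apply htwoA
      have e1 : p*(p*C + C*p)*p = p*C*p + p*C*p := by
        simp only [mul_add, add_mul, ← mul_assoc, hpp, rmul hpp]
      have e2 : p*(a + a + b + c)*p = a + a := by
        simp only [mul_add, add_mul, hpa, hap, hpb, hbp, hpc, zero_mul, add_zero]
      rw [← e1, hPC, e2]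
    have hqCq : q*C*q = d := by
      apply htwoA
      have e1 : q*(q*C + C*q)*q = q*C*q + q*C*q := by
        simp only [mul_add, add_mul, ← mul_assoc, hqq, rmul hqq]
      have e2 : q*(d + d + c + b)*q = d + d := by
        simp only [mul_add, add_mul, hqd, hdq, hqb, hqc, hcq, zero_mul, add_zero]
      rw [← e1, hQC, e2]
    have hpCq : p*C*q = b := by
      have e1 : p*(p*C + C*p)*q = p*C*q := by
        simp only [mul_add, add_mul, ← mul_assoc, hpp, rmul hpq, mul_zero, add_zero]
      have e2 : p*(a + a + b + c)*q = b := by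
        simp only [mul_add, add_mul, hpa, haq, hpb, hbq, hpc, zero_mul, add_zero, zero_add]
      calc p*C*q = p*(p*C + C*p)*q := e1.symm
      _ = p*(a + a + b + c)*q := by rw [hPC]
      _ = b := e2
    have hqCp : q*C*p = c := by
      have e1 : q*(p*C + C*p)*p = q*C*p := by
        simp only [mul_add, add_mul, ← mul_assoc, hqp, zero_mul, rmul hpp, zero_add]
      have e2 : q*(a + a + b + c)*p = c := by
        simp only [mul_add, add_mul, hqa, hqb, hqc, hcp, zero_mul, zero_add]
      calc q*C*p = q*(p*C + C*p)*p := e1.symm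
      _ = q*(a + a + b + c)*p := by rw [hPC]
      _ = c := e2
    have hCv : C = a + b + c + d := by
      calc C = (p+q)*C*(p+q) := by rw [hsum1, one_mul, mul_one]
      _ = p*C*p + p*C*q + q*C*p + q*C*q := by noncomm_ring
      _ = a + b + c + d := by rw [hpCp, hpCq, hqCp, hqCq]
    calc φ (a + b + c + d) = φ C := by rw [hCv]
    _ = φ a + φ b + φ c + φ d := hfg _
  -- ===== hoffSameM : same-corner off-diagonal additivity at scale m =====
  have hoffSameM : ∀ p q : 𝔄, p*p = p → q*q = q → p*q = 0 → q*p = 0 → star p = p → star q = q →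
      p + q = 1 → (∀ X : 𝔄, (∀ Z : 𝔄, X*Z*q = 0) → X = 0) →
      (∀ X : 𝔄, (∀ Z : 𝔄, X*Z*p = 0) → X = 0) →
      ∀ a b : 𝔄, p*a*q = a → p*b*q = b → φ (m•(a+b)) = φ (m•a) + φ (m•b) := by
    intro p q hpp hqq hpq hqp hsp hsq hsum1 hspq hspp a b ha hb
    obtain ⟨hpa, haq, hqa, hap, hsa'⟩ := atoms_off hpp hqq hpq hqp hsp hsq ha
    obtain ⟨hpb, hbq, hqb, hbp, hsb'⟩ := atoms_off hpp hqq hpq hqp hsp hsq hb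
    obtain ⟨hqsa, hsap, hpsa, hsaq, _⟩ := atoms_off hqq hpp hqp hpq hsq hsp hsa'
    have hab : a*b = 0 := by
      conv_lhs => rw [← hpb]
      simp only [← mul_assoc, hap, zero_mul]
    have h := hH (p + a) (q + b)
    have eL : (p+a)*(q+b) + (q+b)*star (p+a) = b*star a + (a+b) + star a + 0 := by
      rw [star_add, hsp]
      simp only [mul_add, add_mul, hpq, hpb, haq, hab, hqp, hqsa, hbp]
      abel
    have hφpa : φ (p + a) = φ p + φ a :=
      h2A p q hpp hqq hpq hqp hsp hsq hsum1 hspq p a (by rw [hpp, hpp]) ha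
    have hφqb : φ (q + b) = φ q + φ b :=
      h2B q p hqq hpp hqp hpq hsq hsp (by rw [add_comm]; exact hsum1) hspp q b
        (by rw [hqq, hqq]) hb
    have hG : φ (p+a) * φ (q+b) + φ (q+b) * star (φ (p+a)) =
        (φ p*φ q + φ q*star (φ p)) + (φ p*φ b + φ b*star (φ p))
          + (φ a*φ q + φ q*star (φ a)) + (φ a*φ b + φ b*star (φ a)) := by
      rw [hφpa, hφqb]
      simp only [star_add]
      noncomm_ring
    rw [eL, hG] at h
    conv_rhs at h => rw [smul_add, smul_add, smul_add]
    rw [← hH p q, ← hH p b, ← hH a q, ← hH a b] at h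
    rw [show p*q + q*star p = (0:𝔄) from by rw [hsp, hpq, hqp, add_zero],
        show p*b + b*star p = b from by rw [hsp, hpb, hbp, add_zero],
        show a*q + q*star a = a + star a from by rw [haq, hqsa],
        show a*b + b*star a = b*star a from by rw [hab, zero_add],
        smul_zero, hφ0, zero_add] at h
    -- LHS of h via hFOUR
    have hbsa : p*(b*star a)*p = b*star a := by
      rw [← mul_assoc, hpb, mul_assoc, hsap]
    have hLHS : φ (m•(b*star a + (a+b) + star a + 0)) =
        φ (m•(b*star a)) + φ (m•(a+b)) + φ (m•(star a)) + φ (m•(0:𝔄)) := by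
      rw [smul_add, smul_add, smul_add]
      exact hFOUR p q hpp hqq hpq hqp hsp hsq hsum1 hspq hspp _ _ _ _
        (smul_sandwich m hbsa)
        (smul_sandwich m (by simp only [mul_add, add_mul, hpa, haq, hpb, hbq]))
        (smul_sandwich m hsa') (by rw [smul_zero, mul_zero, zero_mul])
    rw [hLHS, smul_zero, hφ0, add_zero] at h
    -- RHS : split a + star a via L2a
    rw [show (m:ℕ)•(a + star a) = m•a + m•(star a) from smul_add m a (star a),
        L2a p q hpp hqq hpq hqp hsp hsq hsum1 (m•a) (m•(star a))
          (smul_sandwich m ha) (smul_sandwich m hsa')] at h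
    -- cancel
    have h2 : φ (m•(a+b)) + (φ (m•(b*star a)) + φ (m•(star a))) =
        (φ (m•a) + φ (m•b)) + (φ (m•(b*star a)) + φ (m•(star a))) := by
      calc φ (m•(a+b)) + (φ (m•(b*star a)) + φ (m•(star a)))
          = φ (m•(b*star a)) + φ (m•(a+b)) + φ (m•(star a)) := by abel
      _ = φ (m•b) + (φ (m•a) + φ (m•(star a))) + φ (m•(b*star a)) := h
      _ = (φ (m•a) + φ (m•b)) + (φ (m•(b*star a)) + φ (m•(star a))) := by abel
    exact add_right_cancel h2
  -- ===== hoffSame : same-corner off-diagonal additivity =====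
  have hoffSame : ∀ p q : 𝔄, p*p = p → q*q = q → p*q = 0 → q*p = 0 → star p = p → star q = q →
      p + q = 1 → (∀ X : 𝔄, (∀ Z : 𝔄, X*Z*q = 0) → X = 0) →
      (∀ X : 𝔄, (∀ Z : 𝔄, X*Z*p = 0) → X = 0) →
      ∀ a b : 𝔄, p*a*q = a → p*b*q = b → φ (a + b) = φ a + φ b := by
    intro p q hpp hqq hpq hqp hsp hsq hsum1 hspq hspp a b ha hb
    set a₀ := (m:ℂ)⁻¹ • a with ha₀
    set b₀ := (m:ℂ)⁻¹ • b with hb₀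
    have hma : m • a₀ = a := by
      rw [ha₀, ← Nat.cast_smul_eq_nsmul ℂ, smul_inv_smul₀ hmc]
    have hmb : m • b₀ = b := by
      rw [hb₀, ← Nat.cast_smul_eq_nsmul ℂ, smul_inv_smul₀ hmc]
    have ha' : p*a₀*q = a₀ := by
      rw [ha₀, mul_smul_comm, smul_mul_assoc, ha]
    have hb' : p*b₀*q = b₀ := by
      rw [hb₀, mul_smul_comm, smul_mul_assoc, hb]
    have h := hoffSameM p q hpp hqq hpq hqp hsp hsq hsum1 hspq hspp a₀ b₀ ha' hb'
    rw [smul_add, hma, hmb] at h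
    exact h
  -- ===== hdiagSame : same-corner diagonal additivity =====
  have hdiagSame : ∀ p q : 𝔄, p*p = p → q*q = q → p*q = 0 → q*p = 0 → star p = p → star q = q →
      p + q = 1 → (∀ X : 𝔄, (∀ Z : 𝔄, X*Z*q = 0) → X = 0) →
      (∀ X : 𝔄, (∀ Z : 𝔄, X*Z*p = 0) → X = 0) →
      ∀ a b : 𝔄, p*a*p = a → p*b*p = b → φ (a + b) = φ a + φ b := by
    intro p q hpp hqq hpq hqp hsp hsq hsum1 hspq hspp a b ha hb
    obtain ⟨hpa, hap, hqa, haq, hsa'⟩ := atoms_diag hpp hpq hqp hsp ha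
    obtain ⟨hpb, hbp, hqb, hbq, hsb'⟩ := atoms_diag hpp hpq hqp hsp hb
    set C := g (φ a + φ b) with hCdef
    have hQC : q*C + C*q = 0 := by
      have h := pairT a b q
      rw [hsq, show q*a + a*q = (0:𝔄) from by rw [hqa, haq, add_zero],
          show q*b + b*q = (0:𝔄) from by rw [hqb, hbq, add_zero]] at h
      simp only [smul_zero, hφ0, add_zero] at h
      rw [← hφ0] at h
      exact hcanA _ 0 (by rw [smul_zero]; exact hinj h)
    have hqCq : q*C*q = 0 := by
      apply htorA
      have e1 : q*(q*C + C*q)*q = q*C*q + q*C*q := by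
        simp only [mul_add, add_mul, ← mul_assoc, hqq, rmul hqq]
      rw [← e1, hQC, mul_zero, zero_mul]
    have hpCq : p*C*q = 0 := by
      have e1 : p*(q*C + C*q)*q = p*C*q := by
        simp only [mul_add, add_mul, ← mul_assoc, hpq, zero_mul, rmul hqq, zero_add]
      rw [← e1, hQC, mul_zero, zero_mul]
    have hqCp : q*C*p = 0 := by
      have e1 : q*(q*C + C*q)*p = q*C*p := by
        simp only [mul_add, add_mul, ← mul_assoc, hqq, rmul hqp, mul_zero, add_zero]
      rw [← e1, hQC, mul_zero, zero_mul]
    have hCdec : C = p*C*p := by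
      calc C = (p+q)*C*(p+q) := by rw [hsum1, one_mul, mul_one]
      _ = p*C*p + p*C*q + q*C*p + q*C*q := by noncomm_ring
      _ = p*C*p := by rw [hpCq, hqCp, hqCq, add_zero, add_zero, add_zero]
    have hCp : C*p = C := by conv_lhs => rw [hCdec, mul_assoc, hpp, ← hCdec]
    have hsC : star C = p * star C * p := by
      conv_lhs => rw [hCdec]
      rw [star_mul, star_mul, hsp, mul_assoc]
    have key : ∀ Z : 𝔄, C*(p*Z*q) = (a+b)*(p*Z*q) := by
      intro Z
      set t := p*Z*q with htdef
      have hpt : p*t = t := by rw [htdef]; simp only [← mul_assoc, hpp]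
      have htq : t*q = t := by rw [htdef, mul_assoc, hqq]
      have hqt : q*t = 0 := by rw [htdef]; simp only [← mul_assoc, hqp, zero_mul]
      have htp : t*p = 0 := by rw [htdef, mul_assoc, hqp, mul_zero]
      have hta : t*star a = 0 := by
        conv_lhs => rw [← hsa']
        simp only [← mul_assoc, htp, zero_mul]
      have htb : t*star b = 0 := by
        conv_lhs => rw [← hsb']
        simp only [← mul_assoc, htp, zero_mul]
      have htsC : t * star C = 0 := by
        conv_lhs => rw [hsC]
        simp only [← mul_assoc, htp, zero_mul]
      have h2 := pairT' a b t
      rw [show a*t + t*star a = a*t from by rw [hta, add_zero],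
          show b*t + t*star b = b*t from by rw [htb, add_zero],
          show C*t + t*star C = C*t from by rw [htsC, add_zero],
          (hoffSameM p q hpp hqq hpq hqp hsp hsq hsum1 hspq hspp (a*t) (b*t)
            (by rw [← mul_assoc, hpa, mul_assoc, htq])
            (by rw [← mul_assoc, hpb, mul_assoc, htq])).symm] at h2
      have h3 := hcanA _ _ (hinj h2)
      rw [h3, add_mul]
    have hCv : C = a + b := by
      have h4 : ∀ Z, (C - (a+b))*Z*q = 0 := by
        intro Z
        have e1 : C*(p*Z*q) = C*Z*q := by simp only [← mul_assoc, hCp]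
        have e2 : (a+b)*(p*Z*q) = (a+b)*Z*q := by
          simp only [← mul_assoc, add_mul, hap, hbp]
        have e3 := key Z
        rw [e1, e2] at e3
        rw [sub_mul, sub_mul, e3, sub_self]
      exact sub_eq_zero.mp (hspq _ h4)
    calc φ (a + b) = φ C := by rw [hCv]
    _ = φ a + φ b := hfg _
  -- ===== P₂ and the concrete Peirce data =====
  have hP2proj : P₂*P₂ = P₂ := by
    have h : (1-P₁)*(1-P₁) = 1 - P₁ - P₁ + P₁*P₁ := by noncomm_ring
    rw [hP₂def, h, hproj]; abel
  have h12 : P₁*P₂ = 0 := by rw [hP₂def, mul_sub, mul_one, hproj, sub_self]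
  have h21 : P₂*P₁ = 0 := by rw [hP₂def, sub_mul, one_mul, hproj, sub_self]
  have hsP2 : star P₂ = P₂ := by rw [hP₂def, star_sub, star_one, hsa]
  have hsum : P₁ + P₂ = 1 := by rw [hP₂def]; abel
  have hspade1 : ∀ X : 𝔄, (∀ Z : 𝔄, X*Z*P₁ = 0) → X = 0 :=
    hspade P₁ (Set.mem_insert _ _)
  have hspade2 : ∀ X : 𝔄, (∀ Z : 𝔄, X*Z*P₂ = 0) → X = 0 :=
    hspade P₂ (Set.mem_insert_iff.mpr (Or.inr rfl))
  have hdec : ∀ A : 𝔄, A = P₁*A*P₁ + P₁*A*P₂ + P₂*A*P₁ + P₂*A*P₂ := by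
    intro A
    calc A = (P₁+P₂)*A*(P₁+P₂) := by rw [hsum, one_mul, mul_one]
    _ = P₁*A*P₁ + P₁*A*P₂ + P₂*A*P₁ + P₂*A*P₂ := by noncomm_ring
  have hmem11 : ∀ u : 𝔄, P₁*(P₁*u*P₁)*P₁ = P₁*u*P₁ := fun u => by
    simp only [← mul_assoc, hproj]; rw [mul_assoc, hproj]
  have hmem12 : ∀ u : 𝔄, P₁*(P₁*u*P₂)*P₂ = P₁*u*P₂ := fun u => by
    simp only [← mul_assoc, hproj]; rw [mul_assoc, hP2proj]
  have hmem21 : ∀ u : 𝔄, P₂*(P₂*u*P₁)*P₁ = P₂*u*P₁ := fun u => by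
    simp only [← mul_assoc, hP2proj]; rw [mul_assoc, hproj]
  have hmem22 : ∀ u : 𝔄, P₂*(P₂*u*P₂)*P₂ = P₂*u*P₂ := fun u => by
    simp only [← mul_assoc, hP2proj]; rw [mul_assoc, hP2proj]
  -- ===== full additivity =====
  have hadd : ∀ A B : 𝔄, φ (A + B) = φ A + φ B := by
    intro A B
    have hAB : A + B = (P₁*A*P₁ + P₁*B*P₁) + (P₁*A*P₂ + P₁*B*P₂) + (P₂*A*P₁ + P₂*B*P₁)
        + (P₂*A*P₂ + P₂*B*P₂) := by
      conv_lhs => rw [hdec A, hdec B]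
      abel
    rw [hAB,
        hFOUR P₁ P₂ hproj hP2proj h12 h21 hsa hsP2 hsum hspade2 hspade1 _ _ _ _
          (by rw [mul_add, add_mul, hmem11 A, hmem11 B])
          (by rw [mul_add, add_mul, hmem12 A, hmem12 B])
          (by rw [mul_add, add_mul, hmem21 A, hmem21 B])
          (by rw [mul_add, add_mul, hmem22 A, hmem22 B]),
        hdiagSame P₁ P₂ hproj hP2proj h12 h21 hsa hsP2 hsum hspade2 hspade1 _ _
          (hmem11 A) (hmem11 B),
        hoffSame P₁ P₂ hproj hP2proj h12 h21 hsa hsP2 hsum hspade2 hspade1 _ _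
          (hmem12 A) (hmem12 B),
        hoffSame P₂ P₁ hP2proj hproj h21 h12 hsP2 hsa (by rw [add_comm]; exact hsum)
          hspade1 hspade2 _ _ (hmem21 A) (hmem21 B),
        hdiagSame P₂ P₁ hP2proj hproj h21 h12 hsP2 hsa (by rw [add_comm]; exact hsum)
          hspade1 hspade2 _ _ (hmem22 A) (hmem22 B)]
    conv_rhs => rw [hdec A, hdec B]
    rw [hFOUR P₁ P₂ hproj hP2proj h12 h21 hsa hsP2 hsum hspade2 hspade1 _ _ _ _
          (hmem11 A) (hmem12 A) (hmem21 A) (hmem22 A),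
        hFOUR P₁ P₂ hproj hP2proj h12 h21 hsa hsP2 hsum hspade2 hspade1 _ _ _ _
          (hmem11 B) (hmem12 B) (hmem21 B) (hmem22 B)]
    abel
  -- ===== consequences of additivity =====
  have hsmulm : ∀ x : 𝔄, φ (m • x) = m • φ x := fun x =>
    (AddMonoidHom.mk' φ hadd).map_nsmul m x
  have hCH : ∀ a b : 𝔄, φ (a*b + b*star a) = φ a * φ b + φ b * star (φ a) := by
    intro a b
    apply hcanB
    rw [← hsmulm, hH]
  have hstar : ∀ a : 𝔄, φ (star a) = star (φ a) := by
    intro a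
    have h := hCH a 1
    rw [hunital] at h
    simp only [mul_one, one_mul] at h
    rw [hadd] at h
    exact add_left_cancel h
  have hgadd : ∀ x y : 𝔄', g (x + y) = g x + g y := by
    intro x y
    apply hinj
    rw [hfg, hadd, hfg, hfg]
  have hgstar : ∀ x : 𝔄', g (star x) = star (g x) := by
    intro x
    apply hinj
    rw [hfg, hstar, hfg]
  have hgCH : ∀ a b : 𝔄', g (a*b + b*star a) = g a * g b + g b * star (g a) := by
    intro a b
    apply hinj
    rw [hfg, hCH (g a) (g b), hfg, hfg]
  -- ===== the image projections =====
  have hQsum : φ P₁ + φ P₂ = 1 := by rw [← hadd, hsum, hunital]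
  have hsQ1 : star (φ P₁) = φ P₁ := by rw [← hstar, hsa]
  have hsQ2 : star (φ P₂) = φ P₂ := by rw [← hstar, hsP2]
  have hQ1proj : φ P₁ * φ P₁ = φ P₁ := by
    have h := hCH P₁ P₁
    rw [hsa, hproj, hsQ1, hadd] at h
    exact htwoB _ _ h.symm
  have hQ2proj : φ P₂ * φ P₂ = φ P₂ := by
    have h := hCH P₂ P₂
    rw [hsP2, hP2proj, hsQ2, hadd] at h
    exact htwoB _ _ h.symm
  have hQ12 : φ P₁ * φ P₂ = 0 := by
    have h : φ P₂ = 1 - φ P₁ := by rw [← hQsum]; abel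
    rw [h, mul_sub, mul_one, hQ1proj, sub_self]
  have hQ21 : φ P₂ * φ P₁ = 0 := by
    have h : φ P₂ = 1 - φ P₁ := by rw [← hQsum]; abel
    rw [h, sub_mul, one_mul, hQ1proj, sub_self]
  have hg0 : g 0 = 0 := by apply hinj; rw [hfg, hφ0]
  -- ===== block preservation, φ side =====
  have hblkOff : ∀ p q : 𝔄, p*p = p → q*q = q → p*q = 0 → q*p = 0 → star p = p → star q = q →
      star (φ p) = φ p → star (φ q) = φ q → φ p * φ p = φ p → φ q * φ q = φ q →
      φ p * φ q = 0 → φ q * φ p = 0 → φ p + φ q = 1 →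
      ∀ x : 𝔄, p*x*q = x → φ p * φ x * φ q = φ x := by
    intro p q hpp hqq hpq hqp hsp hsq hsQp hsQq hQpp hQqq hQpq hQqp hQsum1 x hx
    obtain ⟨hpx, hxq, hqx, hxp, hsx⟩ := atoms_off hpp hqq hpq hqp hsp hsq hx
    obtain ⟨hqsx, hsxp, hpsx, hsxq, _⟩ := atoms_off hqq hpp hqp hpq hsq hsp hsx
    have h1 : φ x = φ p * φ x + φ x * φ p := by
      have h := hCH p x
      rw [show p*x + x*star p = x from by rw [hsp, hpx, hxp, add_zero], hsQp] at h
      exact h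
    have h2 : φ x + star (φ x) = φ x * φ q + φ q * star (φ x) := by
      have h := hCH x q
      rw [show x*q + q*star x = x + star x from by rw [hxq, hqsx], hadd, hstar] at h
      exact h
    have e1 : φ p * φ x * φ p = 0 := by
      have e := congrArg (fun z => φ p * z * φ p) h1
      have e' : φ p * (φ p * φ x + φ x * φ p) * φ p = φ p * φ x * φ p + φ p * φ x * φ p := by
        simp only [mul_add, add_mul, ← mul_assoc, hQpp, rmul hQpp]
      rw [e'] at e
      have e2 := e.symm.trans (add_zero (φ p * φ x * φ p)).symm
      exact add_left_cancel e2
    have e2 : φ q * φ x * φ q = 0 := by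
      have e := congrArg (fun z => φ q * z * φ q) h1
      have e' : φ q * (φ p * φ x + φ x * φ p) * φ q = 0 := by
        simp only [mul_add, add_mul, ← mul_assoc, hQqp, zero_mul, rmul hQpq, mul_zero, add_zero]
      rw [e'] at e; exact e
    have e3 : φ q * φ x * φ p = 0 := by
      have e := congrArg (fun z => φ q * z * φ p) h2
      have eL : φ q * (φ x + star (φ x)) * φ p = φ q * φ x * φ p + φ q * star (φ x) * φ p := by
        simp only [mul_add, add_mul]
      have eR : φ q * (φ x * φ q + φ q * star (φ x)) * φ p = φ q * star (φ x) * φ p := by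
        simp only [mul_add, add_mul, ← mul_assoc, hQqq, rmul hQqp, mul_zero, zero_mul, zero_add]
      rw [eL, eR] at e
      have e4 := e.trans (zero_add (φ q * star (φ x) * φ p)).symm
      exact add_right_cancel e4
    have e5 : φ x = φ p * φ x * φ q := by
      calc φ x = (φ p + φ q) * φ x * (φ p + φ q) := by rw [hQsum1, one_mul, mul_one]
      _ = φ p*φ x*φ p + φ p*φ x*φ q + φ q*φ x*φ p + φ q*φ x*φ q := by noncomm_ring
      _ = φ p * φ x * φ q := by rw [e1, e2, e3, zero_add, add_zero, add_zero]
    exact e5.symm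
  have hblkDiag : ∀ p q : 𝔄, p*p = p → q*q = q → p*q = 0 → q*p = 0 → star p = p → star q = q →
      star (φ q) = φ q → φ q * φ q = φ q → φ p + φ q = 1 →
      ∀ x : 𝔄, p*x*p = x → φ p * φ x * φ p = φ x := by
    intro p q hpp hqq hpq hqp hsp hsq hsQq hQqq hQsum1 x hx
    obtain ⟨hpx, hxp, hqx, hxq, hsx⟩ := atoms_diag hpp hpq hqp hsp hx
    have h1 : (0:𝔄') = φ q * φ x + φ x * φ q := by
      have h := hCH q x
      rw [show q*x + x*star q = (0:𝔄) from by rw [hsq, hqx, hxq, add_zero], hφ0, hsQq] at h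
      exact h
    have hqxq : φ q * φ x * φ q = 0 := by
      apply htorB
      have e := congrArg (fun z => φ q * z * φ q) h1
      have eL : φ q * (0:𝔄') * φ q = 0 := by rw [mul_zero, zero_mul]
      have eR : φ q * (φ q * φ x + φ x * φ q) * φ q = φ q * φ x * φ q + φ q * φ x * φ q := by
        simp only [mul_add, add_mul, ← mul_assoc, hQqq, rmul hQqq]
      rw [eL, eR] at e
      exact e.symm
    have hqx' : φ q * φ x = 0 := by
      have e := congrArg (fun z => φ q * z) h1
      have eR : φ q * (φ q * φ x + φ x * φ q) = φ q * φ x := by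
        simp only [mul_add, ← mul_assoc, hQqq]
        rw [hqxq, add_zero]
      rw [mul_zero, eR] at e
      exact e.symm
    have hxq' : φ x * φ q = 0 := by
      have e := congrArg (fun z => z * φ q) h1
      have eR : (φ q * φ x + φ x * φ q) * φ q = φ x * φ q := by
        simp only [add_mul]
        rw [hqxq, zero_add, mul_assoc, hQqq]
      rw [zero_mul, eR] at e
      exact e.symm
    calc φ p * φ x * φ p
        = φ p*φ x*φ p + φ p*φ x*φ q + φ q*φ x*φ p + φ q*φ x*φ q := by
          rw [mul_assoc (φ p) (φ x) (φ q), hxq', mul_zero, hqx', zero_mul, zero_mul]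
          abel
    _ = (φ p + φ q) * φ x * (φ p + φ q) := by noncomm_ring
    _ = φ x := by rw [hQsum1, one_mul, mul_one]
  -- ===== block preservation, g side (off-diagonal only) =====
  have hgblkOff : ∀ p q : 𝔄, p*p = p → q*q = q → p*q = 0 → q*p = 0 → star p = p → star q = q →
      p + q = 1 → star (φ p) = φ p → star (φ q) = φ q → φ p * φ p = φ p → φ q * φ q = φ q →
      φ p * φ q = 0 → φ q * φ p = 0 →
      ∀ y : 𝔄', φ p * y * φ q = y → p * g y * q = g y := by
    intro p q hpp hqq hpq hqp hsp hsq hsum1 hsQp hsQq hQpp hQqq hQpq hQqp y hy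
    obtain ⟨hpy, hyq, hqy, hyp, hsy⟩ := atoms_off hQpp hQqq hQpq hQqp hsQp hsQq hy
    obtain ⟨hqsy, hsyp, hpsy, hsyq, _⟩ := atoms_off hQqq hQpp hQqp hQpq hsQq hsQp hsy
    have h1 : g y = p * g y + g y * p := by
      have h := hgCH (φ p) y
      rw [show φ p*y + y*star (φ p) = y from by rw [hsQp, hpy, hyp, add_zero],
          hgf, show star p = p from hsp] at h
      exact h
    have h2 : g y + star (g y) = g y * q + q * star (g y) := by
      have h := hgCH y (φ q)
      rw [show y*φ q + φ q*star y = y + star y from by rw [hyq, hqsy], hgadd, hgstar, hgf] at h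
      exact h
    have e1 : p * g y * p = 0 := by
      have e := congrArg (fun z => p * z * p) h1
      have e' : p * (p * g y + g y * p) * p = p * g y * p + p * g y * p := by
        simp only [mul_add, add_mul, ← mul_assoc, hpp, rmul hpp]
      rw [e'] at e
      have e2 := e.symm.trans (add_zero (p * g y * p)).symm
      exact add_left_cancel e2
    have e2 : q * g y * q = 0 := by
      have e := congrArg (fun z => q * z * q) h1
      have e' : q * (p * g y + g y * p) * q = 0 := by
        simp only [mul_add, add_mul, ← mul_assoc, hqp, zero_mul, rmul hpq, mul_zero, add_zero]
      rw [e'] at e; exact e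
    have e3 : q * g y * p = 0 := by
      have e := congrArg (fun z => q * z * p) h2
      have eL : q * (g y + star (g y)) * p = q * g y * p + q * star (g y) * p := by
        simp only [mul_add, add_mul]
      have eR : q * (g y * q + q * star (g y)) * p = q * star (g y) * p := by
        simp only [mul_add, add_mul, ← mul_assoc, hqq, rmul hqp, mul_zero, zero_mul, zero_add]
      rw [eL, eR] at e
      have e4 := e.trans (zero_add (q * star (g y) * p)).symm
      exact add_right_cancel e4
    have e5 : g y = p * g y * q := by
      calc g y = (p + q) * g y * (p + q) := by rw [hsum1, one_mul, mul_one]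
      _ = p*g y*p + p*g y*q + q*g y*p + q*g y*q := by noncomm_ring
      _ = p * g y * q := by rw [e1, e2, e3, zero_add, add_zero, add_zero]
    exact e5.symm
  -- ===== multiplicativity cases =====
  have hmulA : ∀ p q : 𝔄, p*p = p → q*q = q → p*q = 0 → q*p = 0 → star p = p → star q = q →
      star (φ p) = φ p → star (φ q) = φ q → φ p*φ p = φ p → φ q*φ q = φ q →
      φ p*φ q = 0 → φ q*φ p = 0 → φ p + φ q = 1 →
      ∀ a b : 𝔄, p*a*p = a → p*b*q = b → φ (a*b) = φ a * φ b := by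
    intro p q hpp hqq hpq hqp hsp hsq hsQp hsQq hQpp hQqq hQpq hQqp hQsum1 a b ha hb
    obtain ⟨hpa, hap, hqa, haq, hsa'⟩ := atoms_diag hpp hpq hqp hsp ha
    obtain ⟨hpb, hbq, hqb, hbp, hsb⟩ := atoms_off hpp hqq hpq hqp hsp hsq hb
    have hbsa : b*star a = 0 := by
      conv_lhs => rw [← hsa']
      simp only [← mul_assoc, hbp, zero_mul]
    have h := hCH a b
    rw [hbsa, add_zero] at h
    have hz : φ b * star (φ a) = 0 := by
      rw [← hstar]
      conv_lhs => rw [← hblkOff p q hpp hqq hpq hqp hsp hsq hsQp hsQq hQpp hQqq hQpq hQqp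
        hQsum1 b hb, ← hblkDiag p q hpp hqq hpq hqp hsp hsq hsQq hQqq hQsum1 (star a) hsa']
      simp only [← mul_assoc, rmul hQqp, mul_zero, zero_mul]
    rw [hz, add_zero] at h
    exact h
  have hmulB : ∀ p q : 𝔄, p*p = p → q*q = q → p*q = 0 → q*p = 0 → star p = p → star q = q →
      star (φ p) = φ p → star (φ q) = φ q → φ p*φ p = φ p → φ q*φ q = φ q →
      φ p*φ q = 0 → φ q*φ p = 0 → φ p + φ q = 1 →
      ∀ a b : 𝔄, p*a*q = a → q*b*q = b → φ (a*b) = φ a * φ b := by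
    intro p q hpp hqq hpq hqp hsp hsq hsQp hsQq hQpp hQqq hQpq hQqp hQsum1 a b ha hb
    obtain ⟨hpa, haq, hqa, hap, hsa'⟩ := atoms_off hpp hqq hpq hqp hsp hsq ha
    obtain ⟨hqb, hbq, hpb, hbp, hsb'⟩ := atoms_diag hqq hqp hpq hsq hb
    obtain ⟨hqsa, hsap, hpsa, hsaq, _⟩ := atoms_off hqq hpp hqp hpq hsq hsp hsa'
    have hab_mem : p*(a*b)*q = a*b := by
      rw [← mul_assoc, hpa, mul_assoc, hbq]
    have hbsa_mem : q*(b*star a)*p = b*star a := by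
      rw [← mul_assoc, hqb, mul_assoc, hsap]
    have h := hCH a b
    rw [hadd] at h
    have e := congrArg (fun z => φ p * z * φ q) h
    have c1 : φ p * (φ (a*b) + φ (b*star a)) * φ q = φ (a*b) := by
      have d0 : φ p * φ (b*star a) * φ q = 0 := by
        conv_lhs => rw [← hblkOff q p hqq hpp hqp hpq hsq hsp hsQq hsQp hQqq hQpp hQqp hQpq
          (by rw [add_comm]; exact hQsum1) (b*star a) hbsa_mem]
        simp only [← mul_assoc, hQpq, zero_mul]
      rw [mul_add, add_mul, hblkOff p q hpp hqq hpq hqp hsp hsq hsQp hsQq hQpp hQqq hQpq hQqp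
        hQsum1 (a*b) hab_mem, d0, add_zero]
    have c2 : φ p * (φ a * φ b + φ b * star (φ a)) * φ q = φ a * φ b := by
      have d1 : φ p * (φ a * φ b) * φ q = φ a * φ b := by
        conv_lhs => rw [← hblkOff p q hpp hqq hpq hqp hsp hsq hsQp hsQq hQpp hQqq hQpq hQqp
          hQsum1 a ha, ← hblkDiag q p hqq hpp hqp hpq hsq hsp hsQp hQpp
          (by rw [add_comm]; exact hQsum1) b hb]
        conv_rhs => rw [← hblkOff p q hpp hqq hpq hqp hsp hsq hsQp hsQq hQpp hQqq hQpq hQqp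
          hQsum1 a ha, ← hblkDiag q p hqq hpp hqp hpq hsq hsp hsQp hQpp
          (by rw [add_comm]; exact hQsum1) b hb]
        simp only [← mul_assoc, hQpp, rmul hQqq]
      have d2 : φ p * (φ b * star (φ a)) * φ q = 0 := by
        conv_lhs => rw [← hblkDiag q p hqq hpp hqp hpq hsq hsp hsQp hQpp
          (by rw [add_comm]; exact hQsum1) b hb]
        simp only [← mul_assoc, hQpq, zero_mul]
      rw [mul_add, add_mul, d1, d2, add_zero]
    rw [c1, c2] at e
    exact e
  have hmulC : ∀ p q : 𝔄, p*p = p → q*q = q → p*q = 0 → q*p = 0 → star p = p → star q = q →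
      star (φ p) = φ p → star (φ q) = φ q → φ p*φ p = φ p → φ q*φ q = φ q →
      φ p*φ q = 0 → φ q*φ p = 0 → φ p + φ q = 1 →
      ∀ a b : 𝔄, p*a*q = a → q*b*p = b → φ (a*b) = φ a * φ b := by
    intro p q hpp hqq hpq hqp hsp hsq hsQp hsQq hQpp hQqq hQpq hQqp hQsum1 a b ha hb
    obtain ⟨hpa, haq, hqa, hap, hsa'⟩ := atoms_off hpp hqq hpq hqp hsp hsq ha
    obtain ⟨hqb, hbp, hpb, hbq, hsb'⟩ := atoms_off hqq hpp hqp hpq hsq hsp hb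
    have hbsa : b*star a = 0 := by
      conv_lhs => rw [← hsa']
      simp only [← mul_assoc, hbq, zero_mul]
    have h := hCH a b
    rw [hbsa, add_zero] at h
    have hz : φ b * star (φ a) = 0 := by
      rw [← hstar]
      conv_lhs => rw [← hblkOff q p hqq hpp hqp hpq hsq hsp hsQq hsQp hQqq hQpp hQqp hQpq
        (by rw [add_comm]; exact hQsum1) b hb,
        ← hblkOff q p hqq hpp hqp hpq hsq hsp hsQq hsQp hQqq hQpp hQqp hQpq
        (by rw [add_comm]; exact hQsum1) (star a) hsa']
      simp only [← mul_assoc, rmul hQpq, mul_zero, zero_mul]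
    rw [hz, add_zero] at h
    exact h
  have hmulD : ∀ p q : 𝔄, p*p = p → q*q = q → p*q = 0 → q*p = 0 → star p = p → star q = q →
      star (φ p) = φ p → star (φ q) = φ q → φ p*φ p = φ p → φ q*φ q = φ q →
      φ p*φ q = 0 → φ q*φ p = 0 → φ p + φ q = 1 → p + q = 1 →
      (∀ Y : 𝔄', (∀ Z : 𝔄', Y * Z * φ q = 0) → Y = 0) →
      ∀ a b : 𝔄, p*a*p = a → p*b*p = b → φ (a*b) = φ a * φ b := by
    intro p q hpp hqq hpq hqp hsp hsq hsQp hsQq hQpp hQqq hQpq hQqp hQsum1 hsum1 hclubq a b ha hb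
    obtain ⟨hpa, hap, hqa, haq, hsa'⟩ := atoms_diag hpp hpq hqp hsp ha
    obtain ⟨hpb, hbp, hqb, hbq, hsb'⟩ := atoms_diag hpp hpq hqp hsp hb
    have hab_pp : p*(a*b)*p = a*b := by
      rw [← mul_assoc, hpa, mul_assoc, hbp]
    have key : ∀ w : 𝔄', (φ (a*b) - φ a*φ b) * (φ p * w * φ q) = 0 := by
      intro w
      set t := g (φ p * w * φ q) with htdef
      have hφt : φ t = φ p * w * φ q := hfg _
      have hwmem : φ p*(φ p * w * φ q)*φ q = φ p * w * φ q := by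
        simp only [← mul_assoc, hQpp]; rw [mul_assoc, hQqq]
      have htmem : p*t*q = t := by
        rw [htdef]
        exact hgblkOff p q hpp hqq hpq hqp hsp hsq hsum1 hsQp hsQq hQpp hQqq hQpq hQqp
          (φ p*w*φ q) hwmem
      obtain ⟨hpt, htq, hqt, htp, _⟩ := atoms_off hpp hqq hpq hqp hsp hsq htmem
      have hbt_mem : p*(b*t)*q = b*t := by
        rw [← mul_assoc, hpb, mul_assoc, htq]
      have e1 : φ ((a*b)*t) = φ (a*b) * φ t :=
        hmulA p q hpp hqq hpq hqp hsp hsq hsQp hsQq hQpp hQqq hQpq hQqp hQsum1 (a*b) t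
          hab_pp htmem
      have e2 : φ (a*(b*t)) = φ a * (φ b * φ t) := by
        rw [hmulA p q hpp hqq hpq hqp hsp hsq hsQp hsQq hQpp hQqq hQpq hQqp hQsum1 a (b*t)
          ha hbt_mem,
          hmulA p q hpp hqq hpq hqp hsp hsq hsQp hsQq hQpp hQqq hQpq hQqp hQsum1 b t hb htmem]
      calc (φ (a*b) - φ a*φ b) * (φ p*w*φ q)
          = φ (a*b)*φ t - (φ a*φ b)*φ t := by rw [hφt, sub_mul]
      _ = φ a*(φ b*φ t) - (φ a*φ b)*φ t := by rw [← e1, mul_assoc a b t, e2]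
      _ = 0 := by rw [← mul_assoc, sub_self]
    have hY : ∀ Z : 𝔄', (φ (a*b) - φ a*φ b) * Z * φ q = 0 := by
      intro Z
      have b1 : φ (a*b) * φ p = φ (a*b) := by
        conv_lhs => rw [← hblkDiag p q hpp hqq hpq hqp hsp hsq hsQq hQqq hQsum1 (a*b) hab_pp]
        rw [mul_assoc, hQpp,
          hblkDiag p q hpp hqq hpq hqp hsp hsq hsQq hQqq hQsum1 (a*b) hab_pp]
      have b2 : φ b * φ p = φ b := by
        conv_lhs => rw [← hblkDiag p q hpp hqq hpq hqp hsp hsq hsQq hQqq hQsum1 b hb]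
        rw [mul_assoc, hQpp,
          hblkDiag p q hpp hqq hpq hqp hsp hsq hsQq hQqq hQsum1 b hb]
      have hYp : (φ (a*b) - φ a*φ b) * φ p = φ (a*b) - φ a*φ b := by
        rw [sub_mul, b1, mul_assoc, b2]
      have e := key Z
      rw [← mul_assoc, ← mul_assoc, hYp] at e
      exact e
    exact sub_eq_zero.mp (hclubq _ hY)
  -- ===== final: full multiplicativity =====
  have hclub1 : ∀ Y : 𝔄', (∀ Z : 𝔄', Y*Z*φ P₁ = 0) → Y = 0 :=
    hclub P₁ (Set.mem_insert _ _)
  have hclub2 : ∀ Y : 𝔄', (∀ Z : 𝔄', Y*Z*φ P₂ = 0) → Y = 0 :=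
    hclub P₂ (Set.mem_insert_iff.mpr (Or.inr rfl))
  have hQsum' : φ P₂ + φ P₁ = 1 := by rw [add_comm]; exact hQsum
  have hsum' : P₂ + P₁ = 1 := by rw [add_comm]; exact hsum
  have hblk11 : ∀ u : 𝔄, φ P₁ * φ (P₁*u*P₁) * φ P₁ = φ (P₁*u*P₁) := fun u =>
    hblkDiag P₁ P₂ hproj hP2proj h12 h21 hsa hsP2 hsQ2 hQ2proj hQsum _ (hmem11 u)
  have hblk22 : ∀ u : 𝔄, φ P₂ * φ (P₂*u*P₂) * φ P₂ = φ (P₂*u*P₂) := fun u =>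
    hblkDiag P₂ P₁ hP2proj hproj h21 h12 hsP2 hsa hsQ1 hQ1proj hQsum' _ (hmem22 u)
  have hblk12 : ∀ u : 𝔄, φ P₁ * φ (P₁*u*P₂) * φ P₂ = φ (P₁*u*P₂) := fun u =>
    hblkOff P₁ P₂ hproj hP2proj h12 h21 hsa hsP2 hsQ1 hsQ2 hQ1proj hQ2proj hQ12 hQ21
      hQsum _ (hmem12 u)
  have hblk21 : ∀ u : 𝔄, φ P₂ * φ (P₂*u*P₁) * φ P₁ = φ (P₂*u*P₁) := fun u =>
    hblkOff P₂ P₁ hP2proj hproj h21 h12 hsP2 hsa hsQ2 hsQ1 hQ2proj hQ1proj hQ21 hQ12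
      hQsum' _ (hmem21 u)
  have hmul : ∀ A B : 𝔄, φ (A * B) = φ A * φ B := by
    intro A B
    have hABprod : A*B = (((P₁*A*P₁)*(P₁*B*P₁) + (P₁*A*P₂)*(P₂*B*P₁))
        + ((P₁*A*P₁)*(P₁*B*P₂) + (P₁*A*P₂)*(P₂*B*P₂)))
        + (((P₂*A*P₁)*(P₁*B*P₁) + (P₂*A*P₂)*(P₂*B*P₁))
        + ((P₂*A*P₁)*(P₁*B*P₂) + (P₂*A*P₂)*(P₂*B*P₂))) := by
      conv_lhs => rw [hdec A, hdec B]
      simp only [mul_add, add_mul, ← mul_assoc, rmul h12, rmul h21, mul_zero, zero_mul,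
        add_zero, zero_add]
      abel
    have hL : φ (A*B) = ((φ (P₁*A*P₁)*φ (P₁*B*P₁) + φ (P₁*A*P₂)*φ (P₂*B*P₁))
        + (φ (P₁*A*P₁)*φ (P₁*B*P₂) + φ (P₁*A*P₂)*φ (P₂*B*P₂)))
        + ((φ (P₂*A*P₁)*φ (P₁*B*P₁) + φ (P₂*A*P₂)*φ (P₂*B*P₁))
        + (φ (P₂*A*P₁)*φ (P₁*B*P₂) + φ (P₂*A*P₂)*φ (P₂*B*P₂))) := by
      rw [hABprod]
      simp only [hadd]
      rw [hmulD P₁ P₂ hproj hP2proj h12 h21 hsa hsP2 hsQ1 hsQ2 hQ1proj hQ2proj hQ12 hQ21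
            hQsum hsum hclub2 _ _ (hmem11 A) (hmem11 B),
          hmulC P₁ P₂ hproj hP2proj h12 h21 hsa hsP2 hsQ1 hsQ2 hQ1proj hQ2proj hQ12 hQ21
            hQsum _ _ (hmem12 A) (hmem21 B),
          hmulA P₁ P₂ hproj hP2proj h12 h21 hsa hsP2 hsQ1 hsQ2 hQ1proj hQ2proj hQ12 hQ21
            hQsum _ _ (hmem11 A) (hmem12 B),
          hmulB P₁ P₂ hproj hP2proj h12 h21 hsa hsP2 hsQ1 hsQ2 hQ1proj hQ2proj hQ12 hQ21
            hQsum _ _ (hmem12 A) (hmem22 B),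
          hmulB P₂ P₁ hP2proj hproj h21 h12 hsP2 hsa hsQ2 hsQ1 hQ2proj hQ1proj hQ21 hQ12
            hQsum' _ _ (hmem21 A) (hmem11 B),
          hmulA P₂ P₁ hP2proj hproj h21 h12 hsP2 hsa hsQ2 hsQ1 hQ2proj hQ1proj hQ21 hQ12
            hQsum' _ _ (hmem22 A) (hmem21 B),
          hmulC P₂ P₁ hP2proj hproj h21 h12 hsP2 hsa hsQ2 hsQ1 hQ2proj hQ1proj hQ21 hQ12
            hQsum' _ _ (hmem21 A) (hmem12 B),
          hmulD P₂ P₁ hP2proj hproj h21 h12 hsP2 hsa hsQ2 hsQ1 hQ2proj hQ1proj hQ21 hQ12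
            hQsum' hsum' hclub1 _ _ (hmem22 A) (hmem22 B)]
    have z1 : φ (P₁*A*P₁) * φ (P₂*B*P₁) = 0 := by
      conv_lhs => rw [← hblk11 A, ← hblk21 B]
      simp only [← mul_assoc, rmul hQ12, mul_zero, zero_mul]
    have z2 : φ (P₁*A*P₁) * φ (P₂*B*P₂) = 0 := by
      conv_lhs => rw [← hblk11 A, ← hblk22 B]
      simp only [← mul_assoc, rmul hQ12, mul_zero, zero_mul]
    have z3 : φ (P₁*A*P₂) * φ (P₁*B*P₁) = 0 := by
      conv_lhs => rw [← hblk12 A, ← hblk11 B]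
      simp only [← mul_assoc, rmul hQ21, mul_zero, zero_mul]
    have z4 : φ (P₁*A*P₂) * φ (P₁*B*P₂) = 0 := by
      conv_lhs => rw [← hblk12 A, ← hblk12 B]
      simp only [← mul_assoc, rmul hQ21, mul_zero, zero_mul]
    have z5 : φ (P₂*A*P₁) * φ (P₂*B*P₁) = 0 := by
      conv_lhs => rw [← hblk21 A, ← hblk21 B]
      simp only [← mul_assoc, rmul hQ12, mul_zero, zero_mul]
    have z6 : φ (P₂*A*P₁) * φ (P₂*B*P₂) = 0 := by
      conv_lhs => rw [← hblk21 A, ← hblk22 B]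
      simp only [← mul_assoc, rmul hQ12, mul_zero, zero_mul]
    have z7 : φ (P₂*A*P₂) * φ (P₁*B*P₁) = 0 := by
      conv_lhs => rw [← hblk22 A, ← hblk11 B]
      simp only [← mul_assoc, rmul hQ21, mul_zero, zero_mul]
    have z8 : φ (P₂*A*P₂) * φ (P₁*B*P₂) = 0 := by
      conv_lhs => rw [← hblk22 A, ← hblk12 B]
      simp only [← mul_assoc, rmul hQ21, mul_zero, zero_mul]
    have hR : φ A * φ B = ((φ (P₁*A*P₁)*φ (P₁*B*P₁) + φ (P₁*A*P₂)*φ (P₂*B*P₁))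
        + (φ (P₁*A*P₁)*φ (P₁*B*P₂) + φ (P₁*A*P₂)*φ (P₂*B*P₂)))
        + ((φ (P₂*A*P₁)*φ (P₁*B*P₁) + φ (P₂*A*P₂)*φ (P₂*B*P₁))
        + (φ (P₂*A*P₁)*φ (P₁*B*P₂) + φ (P₂*A*P₂)*φ (P₂*B*P₂))) := by
      conv_lhs => rw [hdec A, hdec B]
      conv_lhs => rw [show φ (P₁*A*P₁ + P₁*A*P₂ + P₂*A*P₁ + P₂*A*P₂)
            = φ (P₁*A*P₁) + φ (P₁*A*P₂) + φ (P₂*A*P₁) + φ (P₂*A*P₂) from by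
              simp only [hadd],
          show φ (P₁*B*P₁ + P₁*B*P₂ + P₂*B*P₁ + P₂*B*P₂)
            = φ (P₁*B*P₁) + φ (P₁*B*P₂) + φ (P₂*B*P₁) + φ (P₂*B*P₂) from by
              simp only [hadd]]
      simp only [mul_add, add_mul]
      rw [z1, z2, z3, z4, z5, z6, z7, z8]
      abel
    rw [hL, hR]
  exact ⟨hadd, hmul, hstar⟩
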